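/- Let μ ∈ ℝ, k ∈ ℝ, a ∈ ℝⁿ, and define c(x) := (−k + μ⟨a,x⟩)/(2√(1+μ|x|²)) on Ω := {x ∈ ℝⁿ : 1+μ|x|² > 0}. Let c_i := ∂c/∂xⁱ and h^{ij}(x) := (1+μ|x|²)(δ^{ij} + μxⁱxʲ) (the inverse of the constant-curvature metric h_μ). Then for all x ∈ Ω: h^{ij}(x)·c_i(x)·c_j(x) + μ·c(x)² = μ(k² + μ|a|²)/4; in particular, when μ > 0, δ := √(‖∇c‖²_{h_μ} + μc²) is the constant √(μ(k² + μ|a|²))/2, and h^{ij}c_ic_j = μ(4ρ² − 4c² − μ)/4 where ρ² := (k² + (1+|a|²)μ)/4 = δ²/μ + μ/4. -/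

import Mathlib

open scoped BigOperators

noncomputable section

abbrev Vec (n : ℕ) := Fin n → ℝ

/-- The conformal factor `c(x) = (−k + μ⟨a,x⟩)/(2√(1+μ|x|²))`. -/
def cFun {n : ℕ} (μ k : ℝ) (a : Vec n) (x : Vec n) : ℝ :=
  (-k + μ * ∑ i, a i * x i) / (2 * Real.sqrt (1 + μ * ∑ i, (x i)^2))

/-- `c_i = ∂c/∂xⁱ`. -/
def cDeriv {n : ℕ} (μ k : ℝ) (a : Vec n) (i : Fin n) (x : Vec n) : ℝ :=
  fderiv ℝ (cFun μ k a) x (Pi.single i 1)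

/-- The inverse metric `h^{ij}(x) = (1+μ|x|²)(δ^{ij} + μxⁱxʲ)` of `h_μ`. -/
def hInv {n : ℕ} (μ : ℝ) (x : Vec n) (i j : Fin n) : ℝ :=
  (1 + μ * ∑ l, (x l)^2) * ((if i = j then (1:ℝ) else 0) + μ * x i * x j)

lemma cDeriv_eq {n : ℕ} (μ k : ℝ) (a : Vec n) (x : Vec n)
    (hx : 0 < 1 + μ * ∑ l, (x l)^2) (i : Fin n) :
    cDeriv μ k a i x
      = μ * (a i * (1 + μ * ∑ l, (x l)^2) - (-k + μ * ∑ l, a l * x l) * x i)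
        / (2 * Real.sqrt (1 + μ * ∑ l, (x l)^2) ^ 3) := by
  classical
  set P : (j : Fin n) → Vec n →L[ℝ] ℝ := fun j => ContinuousLinearMap.proj j with hP
  set t : ℝ := 1 + μ * ∑ l, (x l)^2 with ht
  set N : ℝ := -k + μ * ∑ l, a l * x l with hN
  have hs : 0 < Real.sqrt t := Real.sqrt_pos.mpr hx
  have hs2 : Real.sqrt t ^ 2 = t := Real.sq_sqrt hx.le
  -- derivative of numerator
  have hNum : HasFDerivAt (fun y : Vec n => -k + μ * ∑ l, a l * y l)
      (μ • ∑ l, a l • P l) x := by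
    have h1 : HasFDerivAt (fun y : Vec n => ∑ l, a l * y l) (∑ l, a l • P l) x :=
      HasFDerivAt.fun_sum fun l _ => ((P l).hasFDerivAt).const_mul (a l)
    exact (h1.const_mul μ).const_add (-k)
  -- derivative of t(y)
  have hT : HasFDerivAt (fun y : Vec n => 1 + μ * ∑ l, (y l)^2)
      (μ • ∑ l, (2 * x l) • P l) x := by
    have h1 : HasFDerivAt (fun y : Vec n => ∑ l, (y l)^2) (∑ l, (2 * x l) • P l) x := by
      refine HasFDerivAt.fun_sum fun l _ => ?_
      have := ((P l).hasFDerivAt (x := x)).mul ((P l).hasFDerivAt (x := x))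
      simp only [hP, ContinuousLinearMap.proj_apply] at this
      have h2 : (⇑(ContinuousLinearMap.proj (R := ℝ) (φ := fun _ : Fin n => ℝ) l) * ⇑(ContinuousLinearMap.proj (R := ℝ) (φ := fun _ : Fin n => ℝ) l) : Vec n → ℝ) = fun y : Vec n => (y l)^2 := by
        funext y; simp only [Pi.mul_apply, ContinuousLinearMap.proj_apply]; ring
      rw [h2] at this
      refine this.congr_fderiv ?_
      rw [two_mul, add_smul]
    exact (h1.const_mul μ).const_add 1
  -- derivative of sqrt ∘ t
  have hS : HasFDerivAt (fun y : Vec n => Real.sqrt (1 + μ * ∑ l, (y l)^2))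
      ((1 / (2 * Real.sqrt t)) • (μ • ∑ l, (2 * x l) • P l)) x := by
    have := (Real.hasDerivAt_sqrt (x := t) (ne_of_gt hx)).comp_hasFDerivAt x hT
    exact this
  -- derivative of inverse of denominator
  have hD0 : (2 * Real.sqrt t) ≠ 0 := by positivity
  have hDinv : HasFDerivAt (fun y : Vec n => (2 * Real.sqrt (1 + μ * ∑ l, (y l)^2))⁻¹)
      ((-(((2 * Real.sqrt t)) ^ 2)⁻¹) • ((2 : ℝ) • ((1 / (2 * Real.sqrt t)) • (μ • ∑ l, (2 * x l) • P l)))) x := by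
    have hD : HasFDerivAt (fun y : Vec n => 2 * Real.sqrt (1 + μ * ∑ l, (y l)^2))
        ((2 : ℝ) • ((1 / (2 * Real.sqrt t)) • (μ • ∑ l, (2 * x l) • P l))) x := hS.const_mul 2
    exact (hasDerivAt_inv hD0).comp_hasFDerivAt x hD
  have hC := hNum.mul hDinv
  have e : cFun μ k a = fun y => (-k + μ * ∑ l, a l * y l) * (2 * Real.sqrt (1 + μ * ∑ l, (y l)^2))⁻¹ := by
    funext y; rw [cFun, div_eq_mul_inv]
  rw [cDeriv, e, show (fun y : Vec n => (-k + μ * ∑ l, a l * y l) * (2 * Real.sqrt (1 + μ * ∑ l, (y l)^2))⁻¹) = (fun y : Vec n => -k + μ * ∑ l, a l * y l) * (fun y : Vec n => (2 * Real.sqrt (1 + μ * ∑ l, (y l)^2))⁻¹) from rfl, hC.fderiv]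
  have hPapp : ∀ (c : Fin n → ℝ), (∑ l, c l • P l) (Pi.single i 1) = c i := by
    intro c
    simp [hP, ContinuousLinearMap.sum_apply, Pi.single_apply]
  simp only [ContinuousLinearMap.add_apply, ContinuousLinearMap.smul_apply, hPapp, smul_eq_mul]
  rw [← ht, ← hN]
  rw [show t = Real.sqrt t ^ 2 from hs2.symm]
  generalize Real.sqrt t = S at hs
  rw [Real.sqrt_sq hs.le]
  field_simp
  ring

-- double sum reduction
lemma dsum {n : ℕ} (t μ : ℝ) (x c : Vec n) :
    ∑ i, ∑ j, (t * ((if i = j then (1:ℝ) else 0) + μ * x i * x j)) * c i * c j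
      = t * (∑ i, (c i)^2) + t * μ * (∑ i, x i * c i)^2 := by
  have h : ∀ i : Fin n, ∑ j, (t * ((if i = j then (1:ℝ) else 0) + μ * x i * x j)) * c i * c j
      = t * (c i)^2 + t * μ * (x i * c i) * ∑ j, x j * c j := by
    intro i
    have e : ∀ j : Fin n, (t * ((if i = j then (1:ℝ) else 0) + μ * x i * x j)) * c i * c j
        = (if i = j then t * (c j)^2 else 0) + t * μ * (x i * c i) * (x j * c j) := by
      intro j; split
      · rename_i hij; subst hij; ring
      · ring
    rw [Finset.sum_congr rfl fun j _ => e j, Finset.sum_add_distrib, ← Finset.mul_sum,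
      Finset.sum_ite_eq]
    simp
  rw [Finset.sum_congr rfl fun i _ => h i, Finset.sum_add_distrib, ← Finset.mul_sum]
  have : ∑ i : Fin n, t * μ * (x i * c i) * ∑ j, x j * c j
      = t * μ * (∑ i, x i * c i)^2 := by
    rw [← Finset.sum_mul, ← Finset.mul_sum]
    ring
  rw [this]

lemma sum_sq_eq {n : ℕ} (μ t N : ℝ) (a x : Vec n) :
    ∑ i, (μ * (a i * t - N * x i))^2
      = μ^2*t^2*(∑ i, (a i)^2) - 2*μ^2*t*N*(∑ i, a i * x i) + μ^2*N^2*(∑ i, (x i)^2) := by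
  have e : ∀ i : Fin n, (μ * (a i * t - N * x i))^2
      = μ^2*t^2*(a i)^2 - 2*μ^2*t*N*(a i * x i) + μ^2*N^2*(x i)^2 := fun i => by ring
  rw [Finset.sum_congr rfl fun i _ => e i, Finset.sum_add_distrib, Finset.sum_sub_distrib,
    ← Finset.mul_sum, ← Finset.mul_sum, ← Finset.mul_sum]

lemma sum_x_eq {n : ℕ} (μ t N : ℝ) (a x : Vec n) :
    ∑ i, x i * (μ * (a i * t - N * x i))
      = μ*t*(∑ i, a i * x i) - μ*N*(∑ i, (x i)^2) := by
  have e : ∀ i : Fin n, x i * (μ * (a i * t - N * x i))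
      = μ*t*(a i * x i) - μ*N*(x i)^2 := fun i => by ring
  rw [Finset.sum_congr rfl fun i _ => e i, Finset.sum_sub_distrib,
    ← Finset.mul_sum, ← Finset.mul_sum]

lemma master {n : ℕ} (μ k t N s : ℝ) (a x : Vec n) (hs : 0 < s) (hs2 : s^2 = t)
    (htdef : t = 1 + μ * ∑ l, (x l)^2) (hNdef : N = -k + μ * ∑ l, a l * x l) :
    (∑ i, ∑ j, (t * ((if i = j then (1:ℝ) else 0) + μ * x i * x j))
        * (μ * (a i * t - N * x i) / (2*s^3)) * (μ * (a j * t - N * x j) / (2*s^3)))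
      + μ * (N/(2*s))^2 = μ * (k^2 + μ * ∑ i, (a i)^2) / 4 := by
  rw [dsum]
  have eA : ∑ i, (μ * (a i * t - N * x i) / (2*s^3))^2
      = (∑ i, (μ * (a i * t - N * x i))^2) / (4*s^6) := by
    rw [Finset.sum_div]
    refine Finset.sum_congr rfl fun i _ => ?_
    rw [div_pow]
    congr 1
    ring
  have eB : ∑ i, x i * (μ * (a i * t - N * x i) / (2*s^3))
      = (∑ i, x i * (μ * (a i * t - N * x i))) / (2*s^3) := by
    rw [Finset.sum_div]
    exact Finset.sum_congr rfl fun i _ => (mul_div_assoc _ _ _).symm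
  rw [eA, eB, sum_sq_eq, sum_x_eq]
  subst htdef hNdef
  rcases eq_or_ne μ 0 with hμ | hμ
  · subst hμ
    simp at hs2 ⊢
  · have hX : (∑ l, (x l)^2) = (s^2 - 1)/μ := by
      rw [hs2]; field_simp; ring
    rw [hX]
    generalize (∑ l, a l * x l) = A
    generalize (∑ i, (a i)^2) = AA
    field_simp
    ring

/-- For `c(x) = (−k + μ⟨a,x⟩)/(2√(1+μ|x|²))` one has, on `{1+μ|x|² > 0}`,
`h^{ij}c_ic_j + μc² = μ(k² + μ|a|²)/4`; in particular for `μ > 0`,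
`δ := √(‖∇c‖²_{h_μ} + μc²)` is the constant `√(μ(k² + μ|a|²))/2` and
`h^{ij}c_ic_j = μ(4ρ² − 4c² − μ)/4` where `ρ² := (k² + (1+|a|²)μ)/4 = δ²/μ + μ/4`. -/
theorem stmt_14 {n : ℕ} (μ k : ℝ) (a : Vec n) :
    ∀ x : Vec n, 0 < 1 + μ * ∑ l, (x l)^2 →
      ((∑ i, ∑ j, hInv μ x i j * cDeriv μ k a i x * cDeriv μ k a j x)
          + μ * (cFun μ k a x)^2 = μ * (k^2 + μ * ∑ i, (a i)^2) / 4) ∧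
      (0 < μ →
        Real.sqrt ((∑ i, ∑ j, hInv μ x i j * cDeriv μ k a i x * cDeriv μ k a j x)
            + μ * (cFun μ k a x)^2)
          = Real.sqrt (μ * (k^2 + μ * ∑ i, (a i)^2)) / 2 ∧
        (∑ i, ∑ j, hInv μ x i j * cDeriv μ k a i x * cDeriv μ k a j x)
          = μ * (4 * ((k^2 + (1 + ∑ i, (a i)^2) * μ) / 4)
              - 4 * (cFun μ k a x)^2 - μ) / 4 ∧
        (k^2 + (1 + ∑ i, (a i)^2) * μ) / 4
          = (Real.sqrt (μ * (k^2 + μ * ∑ i, (a i)^2)) / 2)^2 / μ + μ / 4) := by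
  intro x hx
  have hs : 0 < Real.sqrt (1 + μ * ∑ l, (x l)^2) := Real.sqrt_pos.mpr hx
  have hs2 : (Real.sqrt (1 + μ * ∑ l, (x l)^2))^2 = 1 + μ * ∑ l, (x l)^2 :=
    Real.sq_sqrt hx.le
  have hc : cFun μ k a x
      = (-k + μ * ∑ l, a l * x l) / (2 * Real.sqrt (1 + μ * ∑ l, (x l)^2)) := rfl
  have hH : (∑ i, ∑ j, hInv μ x i j * cDeriv μ k a i x * cDeriv μ k a j x)
      = ∑ i, ∑ j, ((1 + μ * ∑ l, (x l)^2) * ((if i = j then (1:ℝ) else 0) + μ * x i * x j))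
          * (μ * (a i * (1 + μ * ∑ l, (x l)^2) - (-k + μ * ∑ l, a l * x l) * x i)
              / (2 * Real.sqrt (1 + μ * ∑ l, (x l)^2) ^ 3))
          * (μ * (a j * (1 + μ * ∑ l, (x l)^2) - (-k + μ * ∑ l, a l * x l) * x j)
              / (2 * Real.sqrt (1 + μ * ∑ l, (x l)^2) ^ 3)) := by
    refine Finset.sum_congr rfl fun i _ => Finset.sum_congr rfl fun j _ => ?_
    rw [cDeriv_eq μ k a x hx i, cDeriv_eq μ k a x hx j]
    rfl
  have key : (∑ i, ∑ j, hInv μ x i j * cDeriv μ k a i x * cDeriv μ k a j x)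
      + μ * (cFun μ k a x)^2 = μ * (k^2 + μ * ∑ i, (a i)^2) / 4 := by
    rw [hH, hc]
    exact master μ k (1 + μ * ∑ l, (x l)^2) (-k + μ * ∑ l, a l * x l)
      (Real.sqrt (1 + μ * ∑ l, (x l)^2)) a x hs hs2 rfl rfl
  refine ⟨key, fun hμ => ?_⟩
  have hy : 0 ≤ μ * (k^2 + μ * ∑ i, (a i)^2) := by positivity
  have hsq4 : Real.sqrt 4 = 2 := by
    rw [show (4:ℝ) = 2^2 by norm_num, Real.sqrt_sq (by norm_num)]
  refine ⟨?_, ?_, ?_⟩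
  · rw [key, Real.sqrt_div hy, hsq4]
  · linear_combination key
  · rw [div_pow, Real.sq_sqrt hy]
    field_simp
    ring
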